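/- Let u = (u_∅, u_1, u_2, u_3, u_{12}, u_{13}, u_{23}, u_{123}) be a vector of positive real numbers with (u_1 + u_{13})(u_2 + u_{23}) > (u_∅ + u_3)(u_{12} + u_{123}). Then the symmetric 3×3 matrix Θ̂ with θ̂_{13} = θ̂_{23} = 0, θ̂_{11} = (u_1 + u_{13})/(u_∅ + u_3), θ̂_{22} = (u_2 + u_{23})/(u_∅ + u_3), θ̂_{12} = ε·√((u_1+u_{13})(u_2+u_{23}) − (u_∅+u_3)(u_{12}+u_{123}))/(u_∅ + u_3) (for either sign ε = ±1), and θ̂_{33} = (u_3 + u_{13} + u_{23} + u_{123})/(u_∅ + u_1 + u_2 + u_{12}) is a critical point of L_u: all six partial derivatives of L_u vanish at Θ̂. -/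

import Mathlib

/-- The log-likelihood function of the 3×3 DPP model in the six entries
`(θ₁₁, θ₁₂, θ₁₃, θ₂₂, θ₂₃, θ₃₃)` of a symmetric matrix, for data
`u = (u∅, u₁, u₂, u₃, u₁₂, u₁₃, u₂₃, u₁₂₃)`. -/
noncomputable def L3 (u0 u1 u2 u3 u12 u13 u23 u123 : ℝ)
    (t11 t12 t13 t22 t23 t33 : ℝ) : ℝ :=
  u1 * Real.log t11 + u2 * Real.log t22 + u3 * Real.log t33
    + u12 * Real.log (t11 * t22 - t12 ^ 2)
    + u13 * Real.log (t11 * t33 - t13 ^ 2)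
    + u23 * Real.log (t22 * t33 - t23 ^ 2)
    + u123 * Real.log (Matrix.det !![t11, t12, t13; t12, t22, t23; t13, t23, t33])
    - (u0 + u1 + u2 + u3 + u12 + u13 + u23 + u123) *
        Real.log (Matrix.det (!![t11, t12, t13; t12, t22, t23; t13, t23, t33] + 1))

/-- All six partial derivatives of `L_u` with respect to
`θ₁₁, θ₁₂, θ₁₃, θ₂₂, θ₂₃, θ₃₃` vanish at `(t11, t12, t13, t22, t23, t33)`. -/
noncomputable def IsCritical3 (u0 u1 u2 u3 u12 u13 u23 u123 : ℝ)
    (t11 t12 t13 t22 t23 t33 : ℝ) : Prop :=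
  deriv (fun s => L3 u0 u1 u2 u3 u12 u13 u23 u123 s t12 t13 t22 t23 t33) t11 = 0 ∧
  deriv (fun s => L3 u0 u1 u2 u3 u12 u13 u23 u123 t11 s t13 t22 t23 t33) t12 = 0 ∧
  deriv (fun s => L3 u0 u1 u2 u3 u12 u13 u23 u123 t11 t12 s t22 t23 t33) t13 = 0 ∧
  deriv (fun s => L3 u0 u1 u2 u3 u12 u13 u23 u123 t11 t12 t13 s t23 t33) t22 = 0 ∧
  deriv (fun s => L3 u0 u1 u2 u3 u12 u13 u23 u123 t11 t12 t13 t22 s t33) t23 = 0 ∧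
  deriv (fun s => L3 u0 u1 u2 u3 u12 u13 u23 u123 t11 t12 t13 t22 t23 s) t33 = 0

lemma L3_poly (u0 u1 u2 u3 u12 u13 u23 u123 t11 t12 t13 t22 t23 t33 : ℝ) :
    L3 u0 u1 u2 u3 u12 u13 u23 u123 t11 t12 t13 t22 t23 t33 =
  u1 * Real.log t11 + u2 * Real.log t22 + u3 * Real.log t33
    + u12 * Real.log (t11 * t22 - t12 ^ 2)
    + u13 * Real.log (t11 * t33 - t13 ^ 2)
    + u23 * Real.log (t22 * t33 - t23 ^ 2)
    + u123 * Real.log (t11*t22*t33 + 2*t12*t23*t13 - t13^2*t22 - t12^2*t33 - t23^2*t11)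
    - (u0 + u1 + u2 + u3 + u12 + u13 + u23 + u123) *
        Real.log ((t11+1)*(t22+1)*(t33+1) + 2*t12*t23*t13 - t13^2*(t22+1)
          - t12^2*(t33+1) - t23^2*(t11+1)) := by
  unfold L3
  congr 2
  · congr 1; simp [Matrix.det_fin_three]; ring
  · congr 1; simp [Matrix.det_fin_three, Matrix.add_apply, Matrix.one_apply]; ring

lemma hd_log_linear (c a b x : ℝ) (h : a*x + b ≠ 0) :
    HasDerivAt (fun s => c * Real.log (a*s + b)) (c * (a/(a*x+b))) x := by
  have h1 : HasDerivAt (fun s : ℝ => a*s + b) a x := by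
    simpa using ((hasDerivAt_id x).const_mul a).add_const b
  exact (h1.log h).const_mul c

lemma hd_log_quad (c a b x : ℝ) (h : b - a*x^2 ≠ 0) :
    HasDerivAt (fun s => c * Real.log (b - a*s^2)) (c * ((-(2*a*x))/(b - a*x^2))) x := by
  have h1 : HasDerivAt (fun s : ℝ => b - a*s^2) (-(2*a*x)) x := by
    have h2 : HasDerivAt (fun s : ℝ => b - a*s^2) (0 - a * (((2:ℕ):ℝ) * x ^ (2 - 1))) x :=
      (hasDerivAt_const x b).sub ((hasDerivAt_pow 2 x).const_mul a)
    convert h2 using 1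
    push_cast; ring_nf
  exact (h1.log h).const_mul c

set_option maxHeartbeats 1000000 in
/-- For positive data with `(u₁+u₁₃)(u₂+u₂₃) > (u∅+u₃)(u₁₂+u₁₂₃)`, the symmetric
matrix with a 2×2 block `(θ̂₁₁, θ̂₁₂, θ̂₂₂)` and a 1×1 block `θ̂₃₃` given by
`θ̂₁₁ = (u₁+u₁₃)/(u∅+u₃)`, `θ̂₂₂ = (u₂+u₂₃)/(u∅+u₃)`,
`θ̂₁₂ = ±√((u₁+u₁₃)(u₂+u₂₃) − (u∅+u₃)(u₁₂+u₁₂₃))/(u∅+u₃)`,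
`θ̂₃₃ = (u₃+u₁₃+u₂₃+u₁₂₃)/(u∅+u₁+u₂+u₁₂)`, and `θ̂₁₃ = θ̂₂₃ = 0`,
is a critical point of `L_u`. -/
theorem threeByThree_block_critical (u0 u1 u2 u3 u12 u13 u23 u123 : ℝ)
    (h0 : 0 < u0) (h1 : 0 < u1) (h2 : 0 < u2) (h3 : 0 < u3)
    (h12 : 0 < u12) (h13 : 0 < u13) (h23 : 0 < u23) (h123 : 0 < u123)
    (hgt : (u1 + u13) * (u2 + u23) > (u0 + u3) * (u12 + u123))
    (ε : ℝ) (hε : ε = 1 ∨ ε = -1)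
    (t11 t12 t22 t33 : ℝ)
    (ht11 : t11 = (u1 + u13) / (u0 + u3))
    (ht22 : t22 = (u2 + u23) / (u0 + u3))
    (ht12 : t12 = ε * (Real.sqrt ((u1 + u13) * (u2 + u23) - (u0 + u3) * (u12 + u123))
      / (u0 + u3)))
    (ht33 : t33 = (u3 + u13 + u23 + u123) / (u0 + u1 + u2 + u12)) :
    IsCritical3 u0 u1 u2 u3 u12 u13 u23 u123 t11 t12 0 t22 0 t33 := by
  have hA : (0:ℝ) < u0 + u3 := by linarith
  have hDge : (0:ℝ) ≤ (u1 + u13) * (u2 + u23) - (u0 + u3) * (u12 + u123) := by linarith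
  have hsq : t12^2 = ((u1 + u13) * (u2 + u23) - (u0 + u3) * (u12 + u123))/(u0 + u3)^2 := by
    rcases hε with h | h <;> subst h <;>
      rw [ht12, mul_pow, div_pow, Real.sq_sqrt hDge] <;> norm_num
  have pt11 : 0 < t11 := by rw [ht11]; positivity
  have pt22 : 0 < t22 := by rw [ht22]; positivity
  have pt33 : 0 < t33 := by rw [ht33]; positivity
  have pt33p1 : 0 < t33 + 1 := by linarith
  have hPval : t11*t22 - t12^2 = (u12 + u123)/(u0 + u3) := by
    rw [ht11, ht22, hsq]; field_simp; ring
  have hEval : (t11+1)*(t22+1) - t12^2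
      = (u0 + u1 + u2 + u3 + u12 + u13 + u23 + u123)/(u0 + u3) := by
    rw [ht11, ht22, hsq]; field_simp; ring
  have pP : 0 < t11*t22 - t12^2 := by rw [hPval]; positivity
  have pE : 0 < (t11+1)*(t22+1) - t12^2 := by rw [hEval]; positivity
  have nA : (u0 + u3) ≠ 0 := hA.ne'
  have nB : (u1 + u13) ≠ 0 := by positivity
  have nC : (u2 + u23) ≠ 0 := by positivity
  have nPq : (u12 + u123) ≠ 0 := by positivity
  have nM : (u0 + u1 + u2 + u12) ≠ 0 := by positivity
  have nN : (u3 + u13 + u23 + u123) ≠ 0 := by positivity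
  have nS : (u0 + u1 + u2 + u3 + u12 + u13 + u23 + u123) ≠ 0 := by positivity
  refine ⟨?_, ?_, ?_, ?_, ?_, ?_⟩
  · -- ∂/∂t11
    rw [show (fun s => L3 u0 u1 u2 u3 u12 u13 u23 u123 s t12 0 t22 0 t33)
        = (fun s => u1 * Real.log (1*s + 0) + u2 * Real.log (0*s + t22)
          + u3 * Real.log (0*s + t33)
          + u12 * Real.log (t22*s + -(t12^2))
          + u13 * Real.log (t33*s + 0)
          + u23 * Real.log (0*s + t22*t33)
          + u123 * Real.log ((t22*t33)*s + -(t12^2*t33))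
          - (u0 + u1 + u2 + u3 + u12 + u13 + u23 + u123) *
              Real.log (((t22+1)*(t33+1))*s + ((t22+1)*(t33+1) - t12^2*(t33+1)))) from
      funext fun s => by rw [L3_poly]; ring_nf]
    have e1 : (1:ℝ)*t11 + 0 ≠ 0 := by simpa using pt11.ne'
    have e2 : (0:ℝ)*t11 + t22 ≠ 0 := by simpa using pt22.ne'
    have e3 : (0:ℝ)*t11 + t33 ≠ 0 := by simpa using pt33.ne'
    have e4 : t22*t11 + -(t12^2) ≠ 0 := by
      rw [show t22*t11 + -(t12^2) = t11*t22 - t12^2 from by ring]; exact pP.ne'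
    have e5 : t33*t11 + 0 ≠ 0 := by simpa using (mul_pos pt33 pt11).ne'
    have e6 : (0:ℝ)*t11 + t22*t33 ≠ 0 := by simpa using (mul_pos pt22 pt33).ne'
    have e7 : (t22*t33)*t11 + -(t12^2*t33) ≠ 0 := by
      rw [show (t22*t33)*t11 + -(t12^2*t33) = (t11*t22 - t12^2)*t33 from by ring]
      exact (mul_pos pP pt33).ne'
    have e8 : ((t22+1)*(t33+1))*t11 + ((t22+1)*(t33+1) - t12^2*(t33+1)) ≠ 0 := by
      rw [show ((t22+1)*(t33+1))*t11 + ((t22+1)*(t33+1) - t12^2*(t33+1))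
        = ((t11+1)*(t22+1) - t12^2)*(t33+1) from by ring]
      exact (mul_pos pE pt33p1).ne'
    have H := ((((((((hd_log_linear u1 1 0 t11 e1).add
      (hd_log_linear u2 0 t22 t11 e2)).add
      (hd_log_linear u3 0 t33 t11 e3)).add
      (hd_log_linear u12 t22 (-(t12^2)) t11 e4)).add
      (hd_log_linear u13 t33 0 t11 e5)).add
      (hd_log_linear u23 0 (t22*t33) t11 e6)).add
      (hd_log_linear u123 (t22*t33) (-(t12^2*t33)) t11 e7)).sub
      (hd_log_linear (u0 + u1 + u2 + u3 + u12 + u13 + u23 + u123)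
        ((t22+1)*(t33+1)) ((t22+1)*(t33+1) - t12^2*(t33+1)) t11 e8))
    erw [H.deriv]
    rw [show t22*t11 + -(t12^2) = (u12 + u123)/(u0 + u3) from by rw [← hPval]; ring,
        show (t22*t33)*t11 + -(t12^2*t33) = ((u12 + u123)/(u0 + u3))*t33 from by
          rw [show (t22*t33)*t11 + -(t12^2*t33) = (t11*t22 - t12^2)*t33 from by ring, hPval],
        show ((t22+1)*(t33+1))*t11 + ((t22+1)*(t33+1) - t12^2*(t33+1))
          = ((u0 + u1 + u2 + u3 + u12 + u13 + u23 + u123)/(u0 + u3))*(t33+1) from by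
          rw [show ((t22+1)*(t33+1))*t11 + ((t22+1)*(t33+1) - t12^2*(t33+1))
            = ((t11+1)*(t22+1) - t12^2)*(t33+1) from by ring, hEval]]
    norm_num
    rw [ht11]
    field_simp
    ring
  · -- ∂/∂t12
    rw [show (fun s => L3 u0 u1 u2 u3 u12 u13 u23 u123 t11 s 0 t22 0 t33)
        = (fun s => u1 * Real.log (t11 - 0*s^2) + u2 * Real.log (t22 - 0*s^2)
          + u3 * Real.log (t33 - 0*s^2)
          + u12 * Real.log (t11*t22 - 1*s^2)
          + u13 * Real.log (t11*t33 - 0*s^2)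
          + u23 * Real.log (t22*t33 - 0*s^2)
          + u123 * Real.log (t11*t22*t33 - t33*s^2)
          - (u0 + u1 + u2 + u3 + u12 + u13 + u23 + u123) *
              Real.log ((t11+1)*(t22+1)*(t33+1) - (t33+1)*s^2)) from
      funext fun s => by rw [L3_poly]; ring_nf]
    have e1 : t11 - 0*t12^2 ≠ 0 := by simpa using pt11.ne'
    have e2 : t22 - 0*t12^2 ≠ 0 := by simpa using pt22.ne'
    have e3 : t33 - 0*t12^2 ≠ 0 := by simpa using pt33.ne'
    have e4 : t11*t22 - 1*t12^2 ≠ 0 := by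
      rw [show t11*t22 - 1*t12^2 = t11*t22 - t12^2 from by ring]; exact pP.ne'
    have e5 : t11*t33 - 0*t12^2 ≠ 0 := by simpa using (mul_pos pt11 pt33).ne'
    have e6 : t22*t33 - 0*t12^2 ≠ 0 := by simpa using (mul_pos pt22 pt33).ne'
    have e7 : t11*t22*t33 - t33*t12^2 ≠ 0 := by
      rw [show t11*t22*t33 - t33*t12^2 = (t11*t22 - t12^2)*t33 from by ring]
      exact (mul_pos pP pt33).ne'
    have e8 : (t11+1)*(t22+1)*(t33+1) - (t33+1)*t12^2 ≠ 0 := by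
      rw [show (t11+1)*(t22+1)*(t33+1) - (t33+1)*t12^2
        = ((t11+1)*(t22+1) - t12^2)*(t33+1) from by ring]
      exact (mul_pos pE pt33p1).ne'
    have H := ((((((((hd_log_quad u1 0 t11 t12 e1).add
      (hd_log_quad u2 0 t22 t12 e2)).add
      (hd_log_quad u3 0 t33 t12 e3)).add
      (hd_log_quad u12 1 (t11*t22) t12 e4)).add
      (hd_log_quad u13 0 (t11*t33) t12 e5)).add
      (hd_log_quad u23 0 (t22*t33) t12 e6)).add
      (hd_log_quad u123 t33 (t11*t22*t33) t12 e7)).sub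
      (hd_log_quad (u0 + u1 + u2 + u3 + u12 + u13 + u23 + u123)
        (t33+1) ((t11+1)*(t22+1)*(t33+1)) t12 e8))
    erw [H.deriv]
    rw [show t11*t22 - 1*t12^2 = (u12 + u123)/(u0 + u3) from by rw [← hPval]; ring,
        show t11*t22*t33 - t33*t12^2 = ((u12 + u123)/(u0 + u3))*t33 from by
          rw [show t11*t22*t33 - t33*t12^2 = (t11*t22 - t12^2)*t33 from by ring, hPval],
        show (t11+1)*(t22+1)*(t33+1) - (t33+1)*t12^2
          = ((u0 + u1 + u2 + u3 + u12 + u13 + u23 + u123)/(u0 + u3))*(t33+1) from by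
          rw [show (t11+1)*(t22+1)*(t33+1) - (t33+1)*t12^2
            = ((t11+1)*(t22+1) - t12^2)*(t33+1) from by ring, hEval]]
    norm_num
    field_simp
    ring
  · -- ∂/∂t13
    rw [show (fun s => L3 u0 u1 u2 u3 u12 u13 u23 u123 t11 t12 s t22 0 t33)
        = (fun s => u1 * Real.log (t11 - 0*s^2) + u2 * Real.log (t22 - 0*s^2)
          + u3 * Real.log (t33 - 0*s^2)
          + u12 * Real.log ((t11*t22 - t12^2) - 0*s^2)
          + u13 * Real.log (t11*t33 - 1*s^2)
          + u23 * Real.log (t22*t33 - 0*s^2)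
          + u123 * Real.log ((t11*t22*t33 - t12^2*t33) - t22*s^2)
          - (u0 + u1 + u2 + u3 + u12 + u13 + u23 + u123) *
              Real.log (((t11+1)*(t22+1)*(t33+1) - t12^2*(t33+1)) - (t22+1)*s^2)) from
      funext fun s => by rw [L3_poly]; ring_nf]
    have e1 : t11 - 0*(0:ℝ)^2 ≠ 0 := by simpa using pt11.ne'
    have e2 : t22 - 0*(0:ℝ)^2 ≠ 0 := by simpa using pt22.ne'
    have e3 : t33 - 0*(0:ℝ)^2 ≠ 0 := by simpa using pt33.ne'
    have e4 : (t11*t22 - t12^2) - 0*(0:ℝ)^2 ≠ 0 := by simpa using pP.ne'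
    have e5 : t11*t33 - 1*(0:ℝ)^2 ≠ 0 := by simpa using (mul_pos pt11 pt33).ne'
    have e6 : t22*t33 - 0*(0:ℝ)^2 ≠ 0 := by simpa using (mul_pos pt22 pt33).ne'
    have e7 : (t11*t22*t33 - t12^2*t33) - t22*(0:ℝ)^2 ≠ 0 := by
      rw [show (t11*t22*t33 - t12^2*t33) - t22*(0:ℝ)^2 = (t11*t22 - t12^2)*t33 from by ring]
      exact (mul_pos pP pt33).ne'
    have e8 : ((t11+1)*(t22+1)*(t33+1) - t12^2*(t33+1)) - (t22+1)*(0:ℝ)^2 ≠ 0 := by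
      rw [show ((t11+1)*(t22+1)*(t33+1) - t12^2*(t33+1)) - (t22+1)*(0:ℝ)^2
        = ((t11+1)*(t22+1) - t12^2)*(t33+1) from by ring]
      exact (mul_pos pE pt33p1).ne'
    have H := ((((((((hd_log_quad u1 0 t11 0 e1).add
      (hd_log_quad u2 0 t22 0 e2)).add
      (hd_log_quad u3 0 t33 0 e3)).add
      (hd_log_quad u12 0 (t11*t22 - t12^2) 0 e4)).add
      (hd_log_quad u13 1 (t11*t33) 0 e5)).add
      (hd_log_quad u23 0 (t22*t33) 0 e6)).add
      (hd_log_quad u123 t22 (t11*t22*t33 - t12^2*t33) 0 e7)).sub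
      (hd_log_quad (u0 + u1 + u2 + u3 + u12 + u13 + u23 + u123)
        (t22+1) ((t11+1)*(t22+1)*(t33+1) - t12^2*(t33+1)) 0 e8))
    erw [H.deriv]
    norm_num
  · -- ∂/∂t22
    rw [show (fun s => L3 u0 u1 u2 u3 u12 u13 u23 u123 t11 t12 0 s 0 t33)
        = (fun s => u1 * Real.log (0*s + t11) + u2 * Real.log (1*s + 0)
          + u3 * Real.log (0*s + t33)
          + u12 * Real.log (t11*s + -(t12^2))
          + u13 * Real.log (0*s + t11*t33)
          + u23 * Real.log (t33*s + 0)
          + u123 * Real.log ((t11*t33)*s + -(t12^2*t33))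
          - (u0 + u1 + u2 + u3 + u12 + u13 + u23 + u123) *
              Real.log (((t11+1)*(t33+1))*s + ((t11+1)*(t33+1) - t12^2*(t33+1)))) from
      funext fun s => by rw [L3_poly]; ring_nf]
    have e1 : (0:ℝ)*t22 + t11 ≠ 0 := by simpa using pt11.ne'
    have e2 : (1:ℝ)*t22 + 0 ≠ 0 := by simpa using pt22.ne'
    have e3 : (0:ℝ)*t22 + t33 ≠ 0 := by simpa using pt33.ne'
    have e4 : t11*t22 + -(t12^2) ≠ 0 := by
      rw [show t11*t22 + -(t12^2) = t11*t22 - t12^2 from by ring]; exact pP.ne'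
    have e5 : (0:ℝ)*t22 + t11*t33 ≠ 0 := by simpa using (mul_pos pt11 pt33).ne'
    have e6 : t33*t22 + 0 ≠ 0 := by simpa using (mul_pos pt33 pt22).ne'
    have e7 : (t11*t33)*t22 + -(t12^2*t33) ≠ 0 := by
      rw [show (t11*t33)*t22 + -(t12^2*t33) = (t11*t22 - t12^2)*t33 from by ring]
      exact (mul_pos pP pt33).ne'
    have e8 : ((t11+1)*(t33+1))*t22 + ((t11+1)*(t33+1) - t12^2*(t33+1)) ≠ 0 := by
      rw [show ((t11+1)*(t33+1))*t22 + ((t11+1)*(t33+1) - t12^2*(t33+1))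
        = ((t11+1)*(t22+1) - t12^2)*(t33+1) from by ring]
      exact (mul_pos pE pt33p1).ne'
    have H := ((((((((hd_log_linear u1 0 t11 t22 e1).add
      (hd_log_linear u2 1 0 t22 e2)).add
      (hd_log_linear u3 0 t33 t22 e3)).add
      (hd_log_linear u12 t11 (-(t12^2)) t22 e4)).add
      (hd_log_linear u13 0 (t11*t33) t22 e5)).add
      (hd_log_linear u23 t33 0 t22 e6)).add
      (hd_log_linear u123 (t11*t33) (-(t12^2*t33)) t22 e7)).sub
      (hd_log_linear (u0 + u1 + u2 + u3 + u12 + u13 + u23 + u123)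
        ((t11+1)*(t33+1)) ((t11+1)*(t33+1) - t12^2*(t33+1)) t22 e8))
    erw [H.deriv]
    rw [show t11*t22 + -(t12^2) = (u12 + u123)/(u0 + u3) from by rw [← hPval]; ring,
        show (t11*t33)*t22 + -(t12^2*t33) = ((u12 + u123)/(u0 + u3))*t33 from by
          rw [show (t11*t33)*t22 + -(t12^2*t33) = (t11*t22 - t12^2)*t33 from by ring, hPval],
        show ((t11+1)*(t33+1))*t22 + ((t11+1)*(t33+1) - t12^2*(t33+1))
          = ((u0 + u1 + u2 + u3 + u12 + u13 + u23 + u123)/(u0 + u3))*(t33+1) from by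
          rw [show ((t11+1)*(t33+1))*t22 + ((t11+1)*(t33+1) - t12^2*(t33+1))
            = ((t11+1)*(t22+1) - t12^2)*(t33+1) from by ring, hEval]]
    norm_num
    rw [ht22]
    field_simp
    ring
  · -- ∂/∂t23
    rw [show (fun s => L3 u0 u1 u2 u3 u12 u13 u23 u123 t11 t12 0 t22 s t33)
        = (fun s => u1 * Real.log (t11 - 0*s^2) + u2 * Real.log (t22 - 0*s^2)
          + u3 * Real.log (t33 - 0*s^2)
          + u12 * Real.log ((t11*t22 - t12^2) - 0*s^2)
          + u13 * Real.log (t11*t33 - 0*s^2)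
          + u23 * Real.log (t22*t33 - 1*s^2)
          + u123 * Real.log ((t11*t22*t33 - t12^2*t33) - t11*s^2)
          - (u0 + u1 + u2 + u3 + u12 + u13 + u23 + u123) *
              Real.log (((t11+1)*(t22+1)*(t33+1) - t12^2*(t33+1)) - (t11+1)*s^2)) from
      funext fun s => by rw [L3_poly]; ring_nf]
    have e1 : t11 - 0*(0:ℝ)^2 ≠ 0 := by simpa using pt11.ne'
    have e2 : t22 - 0*(0:ℝ)^2 ≠ 0 := by simpa using pt22.ne'
    have e3 : t33 - 0*(0:ℝ)^2 ≠ 0 := by simpa using pt33.ne'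
    have e4 : (t11*t22 - t12^2) - 0*(0:ℝ)^2 ≠ 0 := by simpa using pP.ne'
    have e5 : t11*t33 - 0*(0:ℝ)^2 ≠ 0 := by simpa using (mul_pos pt11 pt33).ne'
    have e6 : t22*t33 - 1*(0:ℝ)^2 ≠ 0 := by simpa using (mul_pos pt22 pt33).ne'
    have e7 : (t11*t22*t33 - t12^2*t33) - t11*(0:ℝ)^2 ≠ 0 := by
      rw [show (t11*t22*t33 - t12^2*t33) - t11*(0:ℝ)^2 = (t11*t22 - t12^2)*t33 from by ring]
      exact (mul_pos pP pt33).ne'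
    have e8 : ((t11+1)*(t22+1)*(t33+1) - t12^2*(t33+1)) - (t11+1)*(0:ℝ)^2 ≠ 0 := by
      rw [show ((t11+1)*(t22+1)*(t33+1) - t12^2*(t33+1)) - (t11+1)*(0:ℝ)^2
        = ((t11+1)*(t22+1) - t12^2)*(t33+1) from by ring]
      exact (mul_pos pE pt33p1).ne'
    have H := ((((((((hd_log_quad u1 0 t11 0 e1).add
      (hd_log_quad u2 0 t22 0 e2)).add
      (hd_log_quad u3 0 t33 0 e3)).add
      (hd_log_quad u12 0 (t11*t22 - t12^2) 0 e4)).add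
      (hd_log_quad u13 0 (t11*t33) 0 e5)).add
      (hd_log_quad u23 1 (t22*t33) 0 e6)).add
      (hd_log_quad u123 t11 (t11*t22*t33 - t12^2*t33) 0 e7)).sub
      (hd_log_quad (u0 + u1 + u2 + u3 + u12 + u13 + u23 + u123)
        (t11+1) ((t11+1)*(t22+1)*(t33+1) - t12^2*(t33+1)) 0 e8))
    erw [H.deriv]
    norm_num
  · -- ∂/∂t33
    rw [show (fun s => L3 u0 u1 u2 u3 u12 u13 u23 u123 t11 t12 0 t22 0 s)
        = (fun s => u1 * Real.log (0*s + t11) + u2 * Real.log (0*s + t22)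
          + u3 * Real.log (1*s + 0)
          + u12 * Real.log (0*s + (t11*t22 - t12^2))
          + u13 * Real.log (t11*s + 0)
          + u23 * Real.log (t22*s + 0)
          + u123 * Real.log ((t11*t22 - t12^2)*s + 0)
          - (u0 + u1 + u2 + u3 + u12 + u13 + u23 + u123) *
              Real.log (((t11+1)*(t22+1) - t12^2)*s + ((t11+1)*(t22+1) - t12^2))) from
      funext fun s => by rw [L3_poly]; ring_nf]
    have e1 : (0:ℝ)*t33 + t11 ≠ 0 := by simpa using pt11.ne'
    have e2 : (0:ℝ)*t33 + t22 ≠ 0 := by simpa using pt22.ne'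
    have e3 : (1:ℝ)*t33 + 0 ≠ 0 := by simpa using pt33.ne'
    have e4 : (0:ℝ)*t33 + (t11*t22 - t12^2) ≠ 0 := by simpa using pP.ne'
    have e5 : t11*t33 + 0 ≠ 0 := by simpa using (mul_pos pt11 pt33).ne'
    have e6 : t22*t33 + 0 ≠ 0 := by simpa using (mul_pos pt22 pt33).ne'
    have e7 : (t11*t22 - t12^2)*t33 + 0 ≠ 0 := by simpa using (mul_pos pP pt33).ne'
    have e8 : ((t11+1)*(t22+1) - t12^2)*t33 + ((t11+1)*(t22+1) - t12^2) ≠ 0 := by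
      rw [show ((t11+1)*(t22+1) - t12^2)*t33 + ((t11+1)*(t22+1) - t12^2)
        = ((t11+1)*(t22+1) - t12^2)*(t33+1) from by ring]
      exact (mul_pos pE pt33p1).ne'
    have H := ((((((((hd_log_linear u1 0 t11 t33 e1).add
      (hd_log_linear u2 0 t22 t33 e2)).add
      (hd_log_linear u3 1 0 t33 e3)).add
      (hd_log_linear u12 0 (t11*t22 - t12^2) t33 e4)).add
      (hd_log_linear u13 t11 0 t33 e5)).add
      (hd_log_linear u23 t22 0 t33 e6)).add
      (hd_log_linear u123 (t11*t22 - t12^2) 0 t33 e7)).sub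
      (hd_log_linear (u0 + u1 + u2 + u3 + u12 + u13 + u23 + u123)
        ((t11+1)*(t22+1) - t12^2) ((t11+1)*(t22+1) - t12^2) t33 e8))
    erw [H.deriv]
    simp only [add_zero, zero_mul, zero_add, one_mul, mul_zero, zero_div]
    rw [show ((t11+1)*(t22+1) - t12^2)*t33 + ((t11+1)*(t22+1) - t12^2)
          = ((t11+1)*(t22+1) - t12^2)*(t33+1) from by ring,
        div_mul_cancel_left₀ pt11.ne', div_mul_cancel_left₀ pt22.ne',
        div_mul_cancel_left₀ pP.ne', div_mul_cancel_left₀ pE.ne']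
    rw [ht33]
    field_simp
    ring
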